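/- Let Φ be a first-order sentence over Σ having a finitely universal model set 𝓘, and let Ψ = ∀Σ'.Ψ* be a homomorphism-closed ∀SO sentence. Then Φ ⊭ Ψ (i.e., there exists an instance satisfying Φ but not Ψ) if and only if there exists I ∈ 𝓘 with I ⊭ Ψ. -/

import Mathlib

/-
STATEMENT 0: Let Φ be a first-order sentence over Σ having a finitely universal
model set 𝓘, and let Ψ = ∀Σ.Ψ* be a homomorphism-closed ∀SO sentence. Then
Φ ⊭ Ψ (i.e., there exists an instance satisfying Φ but not Ψ) if and only if
there exists I ∈ 𝓘 with I ⊭ Ψ.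
-/

namespace Stmt0

/-- Terms: constants and nulls, each drawn from a countably infinite set. -/
inductive GTerm where
  | const : ℕ → GTerm
  | null  : ℕ → GTerm
  deriving DecidableEq

/-- A (finite, in applications) relational signature. -/
structure Signature where
  symbols : Type
  arity : symbols → ℕ

/-- An atom `R(t₁,…,tₙ)` over a signature. -/
structure Atom (σ : Signature) where
  rel : σ.symbols
  args : Fin (σ.arity rel) → GTerm

/-- An instance is a set of atoms. -/
abbrev Inst (σ : Signature) : Type := Set (Atom σ)

/-- The active domain of an instance: all terms occurring in its atoms. -/
def adom {σ : Signature} (I : Inst σ) : Set GTerm :=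
  {t | ∃ a ∈ I, ∃ i, a.args i = t}

/-- `h` is a homomorphism from `I` to `J`: identity on constants, maps atoms of `I`
into `J`. -/
def IsHom {σ : Signature} (I J : Inst σ) (h : GTerm → GTerm) : Prop :=
  (∀ c : ℕ, h (GTerm.const c) = GTerm.const c) ∧
    ∀ a ∈ I, (⟨a.rel, fun i => h (a.args i)⟩ : Atom σ) ∈ J

/-- There is a homomorphism from `I` to `J`. -/
def HomTo {σ : Signature} (I J : Inst σ) : Prop := ∃ h, IsHom I J h

/-- First-order terms: variables and constants. -/
inductive FOTerm where
  | var : ℕ → FOTerm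
  | cst : ℕ → FOTerm

def FOTerm.fv : FOTerm → Set ℕ
  | .var n => {n}
  | .cst _ => ∅

/-- First-order formulas over a signature (atoms, equality, falsum, implication,
universal quantification form a complete set of connectives). -/
inductive FO (σ : Signature) where
  | rel : (R : σ.symbols) → (Fin (σ.arity R) → FOTerm) → FO σ
  | eq : FOTerm → FOTerm → FO σ
  | fls : FO σ
  | imp : FO σ → FO σ → FO σ
  | all : ℕ → FO σ → FO σ

/-- Free variables of a formula. -/
def FO.fv {σ : Signature} : FO σ → Set ℕ
  | .rel _ ts => ⋃ i, (ts i).fv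
  | .eq t u => t.fv ∪ u.fv
  | .fls => ∅
  | .imp φ ψ => φ.fv ∪ ψ.fv
  | .all n φ => φ.fv \ {n}

def FOTerm.eval (v : ℕ → GTerm) : FOTerm → GTerm
  | .var n => v n
  | .cst c => GTerm.const c

/-- Tarskian satisfaction of a formula in an instance `I` (viewed as a first-order
structure whose domain is `adom I`), under an assignment `v`. -/
def FOSat {σ : Signature} (I : Inst σ) (v : ℕ → GTerm) : FO σ → Prop
  | .rel R ts => (⟨R, fun i => (ts i).eval v⟩ : Atom σ) ∈ I
  | .eq t u => t.eval v = u.eval v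
  | .fls => False
  | .imp φ ψ => FOSat I v φ → FOSat I v ψ
  | .all n φ => ∀ t ∈ adom I, FOSat I (Function.update v n t) φ

/-- Satisfaction of an FO sentence (a closed formula: all assignments agree). -/
def Sat {σ : Signature} (I : Inst σ) (φ : FO σ) : Prop := ∀ v, FOSat I v φ

/-- Disjoint union of two signatures. -/
def Signature.sum (σ σ' : Signature) : Signature :=
  ⟨σ.symbols ⊕ σ'.symbols, Sum.elim σ.arity σ'.arity⟩

/-- The (Σ∪Σ')-structure obtained from a Σ-instance `I` and an interpretation `J`
of the Σ'-symbols. -/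
def sumInst {σ σ' : Signature} (I : Inst σ) (J : Inst σ') : Inst (σ.sum σ') :=
  {a | (∃ b ∈ I, a = (⟨Sum.inl b.rel, b.args⟩ : Atom (σ.sum σ'))) ∨
       (∃ b ∈ J, a = (⟨Sum.inr b.rel, b.args⟩ : Atom (σ.sum σ')))}

/-- `I ⊨ ∀Σ'.Ψ`: for every interpretation of the Σ'-symbols by relations on
`adom I`, the resulting (Σ∪Σ')-structure satisfies `Ψ`. -/
def SatASO {σ σ' : Signature} (I : Inst σ) (Ψ : FO (σ.sum σ')) : Prop :=
  ∀ J : Inst σ', adom J ⊆ adom I → ∀ v, FOSat (sumInst I J) v Ψ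

/-- The ∀SO sentence `∀Σ'.Ψ` is homomorphism-closed. -/
def HomClosed {σ σ' : Signature} (Ψ : FO (σ.sum σ')) : Prop :=
  ∀ I J : Inst σ, SatASO I Ψ → HomTo I J → SatASO J Ψ

/-- `S` is a finitely universal model set for `Φ`: every member satisfies `Φ`, and
for every instance `J ⊨ Φ` there is `I ∈ S` such that every finite subinstance of
`I` admits a homomorphism into `J`. -/
def FinitelyUniversal {σ : Signature} (Φ : FO σ) (S : Set (Inst σ)) : Prop :=
  (∀ I ∈ S, Sat I Φ) ∧
    ∀ J : Inst σ, Sat J Φ →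
      ∃ I ∈ S, ∀ I' : Inst σ, I'.Finite → I' ⊆ I → HomTo I' J

namespace Proof0

open FirstOrder Language Structure

attribute [local instance] Classical.propDecidable

/-- Old-style `iAlls`: relabel along `f`, then quantify the `γ`-variables. -/
noncomputable def oiAlls {L : Language} {α β : Type*} {γ : Type*} [Finite γ] (f : α → β ⊕ γ)
    (φ : L.Formula α) : L.Formula β :=
  Formula.iAlls γ (φ.relabel f)

/-- Old-style `iExs`. -/
noncomputable def oiExs {L : Language} {α β : Type*} {γ : Type*} [Finite γ] (f : α → β ⊕ γ)
    (φ : L.Formula α) : L.Formula β :=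
  Formula.iExs γ (φ.relabel f)

lemma realize_oiAlls {L : Language} {M : Type*} [L.Structure M] {α β : Type*} {γ : Type*}
    [Finite γ] {f : α → β ⊕ γ} {φ : L.Formula α} {v : β → M} :
    (oiAlls f φ).Realize v ↔ ∀ i : γ → M, φ.Realize (fun a => Sum.elim v i (f a)) := by
  rw [oiAlls, Formula.realize_iAlls]
  exact forall_congr' fun i => Formula.realize_relabel

lemma realize_oiExs {L : Language} {M : Type*} [L.Structure M] {α β : Type*} {γ : Type*}
    [Finite γ] {f : α → β ⊕ γ} {φ : L.Formula α} {v : β → M} :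
    (oiExs f φ).Realize v ↔ ∃ i : γ → M, φ.Realize (fun a => Sum.elim v i (f a)) := by
  rw [oiExs, Formula.realize_iExs]
  exact exists_congr fun i => Formula.realize_relabel

instance : Countable GTerm := by
  apply Function.Injective.countable (f := fun t : GTerm => match t with
    | .const m => (Sum.inl m : ℕ ⊕ ℕ) | .null k => Sum.inr k)
  intro a b h
  cases a <;> cases b <;> simp_all

lemma eval_congr {t : FOTerm} {v w : ℕ → GTerm} (h : ∀ n ∈ t.fv, v n = w n) :
    t.eval v = t.eval w := by
  cases t with
  | var n => exact h n (by simp [FOTerm.fv])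
  | cst m => rfl

lemma fosat_congr {σ : Signature} {I : Inst σ} (φ : FO σ) :
    ∀ (v w : ℕ → GTerm), (∀ n ∈ φ.fv, v n = w n) → (FOSat I v φ ↔ FOSat I w φ) := by
  induction φ with
  | rel R ts =>
    intro v w h
    have : ∀ i, (ts i).eval v = (ts i).eval w := fun i =>
      eval_congr (fun n hn => h n (by simp [FO.fv]; exact ⟨i, hn⟩))
    simp only [FOSat]
    rw [show (fun i => (ts i).eval v) = fun i => (ts i).eval w from funext this]
  | eq t u =>
    intro v w h
    simp only [FOSat]
    rw [eval_congr (fun n hn => h n (by simp [FO.fv, hn])),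
      eval_congr (t := u) (fun n hn => h n (by simp [FO.fv, hn]))]
  | fls => intro v w h; rfl
  | imp φ ψ ih1 ih2 =>
    intro v w h
    simp only [FOSat]
    rw [ih1 v w (fun n hn => h n (by simp [FO.fv, hn])),
      ih2 v w (fun n hn => h n (by simp [FO.fv, hn]))]
  | all n φ ih =>
    intro v w h
    simp only [FOSat]
    refine forall_congr' fun t => forall_congr' fun ht => ih _ _ fun m hm => ?_
    by_cases hmn : m = n
    · subst hmn; simp
    · simp only [Function.update, dif_neg hmn]
      exact h m (by simp [FO.fv, hm, hmn])

lemma fosat_closed {σ : Signature} {I : Inst σ} {φ : FO σ} (h : φ.fv = ∅)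
    (v w : ℕ → GTerm) : FOSat I v φ ↔ FOSat I w φ :=
  fosat_congr φ v w (by simp [h])


variable (σ σ' : Signature)

/-- The first-order language used for the compactness argument: relation symbols
from `σ.sum σ'` and constants indexed by `GTerm`. -/
def Lg : Language where
  Functions := fun n => match n with
    | 0 => GTerm
    | _ + 1 => Empty
  Relations := fun n => {R : (σ.sum σ').symbols // (σ.sum σ').arity R = n}

variable {σ σ'}

instance : Countable ((Σ l, (Lg σ σ').Functions l)) := by
  have : ∀ l, Countable ((Lg σ σ').Functions l) := by
    intro l
    match l with
    | 0 => exact inferInstanceAs (Countable GTerm)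
    | l + 1 => exact inferInstanceAs (Countable Empty)
  exact inferInstance

instance [Finite σ.symbols] [Finite σ'.symbols] : Countable ((Σ l, (Lg σ σ').Relations l)) := by
  have hfin : Finite (σ.sum σ').symbols := inferInstanceAs (Finite (σ.symbols ⊕ σ'.symbols))
  have : ∀ l, Countable ((Lg σ σ').Relations l) := by
    intro l
    exact inferInstanceAs (Countable {R : (σ.sum σ').symbols // (σ.sum σ').arity R = l})
  exact inferInstance

lemma Lg_card_le [Finite σ.symbols] [Finite σ'.symbols] : (Lg σ σ').card ≤ Cardinal.aleph0 := by
  have : Countable (Lg σ σ').Symbols := by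
    unfold Language.Symbols
    infer_instance
  exact Cardinal.mk_le_aleph0

/-- The interpretation of the constant `t : GTerm` in an `Lg`-structure. -/
def cinterp (σ σ' : Signature) {N : Type} [(Lg σ σ').Structure N] (t : GTerm) : N :=
  @Structure.funMap (Lg σ σ') N _ 0 t (fun i => i.elim0)

/-- The instance over `σ.sum σ'` induced by an `Lg`-structure and a map `g` into terms. -/
def toInst (σ σ' : Signature) (N : Type) [(Lg σ σ').Structure N] (g : N → GTerm) : Inst (σ.sum σ') :=
  {a | ∃ (n : ℕ) (R : (Lg σ σ').Relations n) (x : Fin n → N),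
        @Structure.RelMap (Lg σ σ') N _ n R x ∧ a = ⟨R.1, fun i => g (x (Fin.cast R.2 i))⟩}

lemma mem_toInst {N : Type} [(Lg σ σ').Structure N] {g : N → GTerm} (hg : Function.Injective g)
    (R : (σ.sum σ').symbols) (x : Fin ((σ.sum σ').arity R) → N) :
    (⟨R, fun i => g (x i)⟩ : Atom (σ.sum σ')) ∈ toInst σ σ' N g ↔
      @Structure.RelMap (Lg σ σ') N _ _ ⟨R, rfl⟩ x := by
  constructor
  · rintro ⟨n, ⟨R', hR'⟩, y, hrel, heq⟩
    rw [Atom.mk.injEq] at heq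
    obtain ⟨h1, h2⟩ := heq
    subst h1
    subst hR'
    have h3 : (fun i => g (x i)) = fun i => g (y (Fin.cast rfl i)) := eq_of_heq h2
    have h4 : x = y := by
      funext i
      exact hg (congrFun h3 i)
    rw [h4]
    exact hrel
  · intro hrel
    refine ⟨(σ.sum σ').arity R, ⟨R, rfl⟩, x, hrel, ?_⟩
    congr 1

lemma mem_adom_toInst {N : Type} [(Lg σ σ').Structure N] {g : N → GTerm} {t : GTerm} :
    t ∈ adom (toInst σ σ' N g) ↔ ∃ x : N,
      (∃ (n : ℕ) (R : (Lg σ σ').Relations n) (y : Fin n → N) (i : Fin n),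
        @Structure.RelMap (Lg σ σ') N _ n R y ∧ y i = x) ∧ g x = t := by
  constructor
  · rintro ⟨a, ⟨n, R, y, hrel, rfl⟩, i, hi⟩
    exact ⟨y (Fin.cast R.2 i), ⟨n, R, y, Fin.cast R.2 i, hrel, rfl⟩, hi⟩
  · rintro ⟨x, ⟨n, R, y, i, hrel, rfl⟩, rfl⟩
    exact ⟨⟨R.1, fun j => g (y (Fin.cast R.2 j))⟩, ⟨n, R, y, hrel, rfl⟩,
      Fin.cast R.2.symm i, by simp⟩


/-- Translation of first-order terms. -/
def transTerm : FOTerm → (Lg σ σ').Term ℕ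
  | .var n => Term.var n
  | .cst m => Constants.term (show (Lg σ σ').Constants from GTerm.const m)

lemma realize_transTerm {N : Type} [(Lg σ σ').Structure N] {g : N → GTerm}
    (hc : ∀ m, g (cinterp σ σ' (GTerm.const m)) = GTerm.const m)
    (t : FOTerm) (w : ℕ → N) :
    FOTerm.eval (fun n => g (w n)) t = g ((transTerm (σ := σ) (σ' := σ') t).realize w) := by
  cases t with
  | var n => rfl
  | cst m =>
    show GTerm.const m = g ((Constants.term (show (Lg σ σ').Constants from GTerm.const m)).realize w)
    have h : ((Constants.term (show (Lg σ σ').Constants from GTerm.const m)).realize w : N)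
        = cinterp σ σ' (GTerm.const m) := by
      simp only [Constants.term, Term.realize, cinterp]
      congr 1
      funext i
      exact i.elim0
    rw [h, hc]

/-- A formula with free variable `n` expressing that `n` occurs in some atom whose
relation symbol belongs to the list `l`. -/
noncomputable def inAtomF (l : List (σ.sum σ').symbols) (n : ℕ) : (Lg σ σ').Formula ℕ :=
  List.foldr (· ⊔ ·) ⊥ (l.map (fun R =>
    oiExs (γ := Fin ((σ.sum σ').arity R))
      (Sum.elim (fun _ : Unit => Sum.inl n) Sum.inr)
      ((Relations.formula (⟨R, rfl⟩ : (Lg σ σ').Relations _)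
          (fun i => Term.var (Sum.inr i))) ⊓
        List.foldr (· ⊔ ·) ⊥ ((List.finRange ((σ.sum σ').arity R)).map
          (fun i => Term.equal (Term.var (Sum.inl ())) (Term.var (Sum.inr i)))))))

lemma formula_realize_foldr_sup {α : Type} {N : Type} [(Lg σ σ').Structure N]
    (l : List ((Lg σ σ').Formula α)) (w : α → N) :
    (List.foldr (· ⊔ ·) ⊥ l).Realize w ↔ ∃ φ ∈ l, Formula.Realize φ w :=
  BoundedFormula.realize_foldr_sup l w default

lemma realize_inAtomF {N : Type} [(Lg σ σ').Structure N]
    (l : List (σ.sum σ').symbols) (n : ℕ) (w : ℕ → N) :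
    (inAtomF l n).Realize w ↔ ∃ R ∈ l, ∃ y : Fin ((σ.sum σ').arity R) → N,
      @Structure.RelMap (Lg σ σ') N _ _ ⟨R, rfl⟩ y ∧ ∃ i, y i = w n := by
  unfold inAtomF
  rw [formula_realize_foldr_sup]
  constructor
  · rintro ⟨φ, hφ, hreal⟩
    rw [List.mem_map] at hφ
    obtain ⟨R, hR, rfl⟩ := hφ
    refine ⟨R, hR, ?_⟩
    rw [realize_oiExs] at hreal
    obtain ⟨y, hy⟩ := hreal
    rw [Formula.realize_inf] at hy
    obtain ⟨h1, h2⟩ := hy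
    refine ⟨y, ?_, ?_⟩
    · have := Formula.realize_rel.1 h1
      convert this using 1
      rfl
    · rw [formula_realize_foldr_sup] at h2
      obtain ⟨ψ, hψ, hre⟩ := h2
      rw [List.mem_map] at hψ
      obtain ⟨i, _, rfl⟩ := hψ
      refine ⟨i, ?_⟩
      have := Formula.realize_equal.1 hre
      simpa [Term.realize] using this.symm
  · rintro ⟨R, hR, y, hrel, i, hi⟩
    refine ⟨_, List.mem_map.2 ⟨R, hR, rfl⟩, ?_⟩
    rw [realize_oiExs]
    refine ⟨y, ?_⟩
    rw [Formula.realize_inf]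
    constructor
    · erw [Formula.realize_rel]
      convert hrel using 1
      rfl
    · rw [formula_realize_foldr_sup]
      refine ⟨_, List.mem_map.2 ⟨i, List.mem_finRange i, rfl⟩, ?_⟩
      rw [Formula.realize_equal]
      simp [Term.realize, hi]


/-- Translation of deep formulas into Mathlib first-order formulas, with
quantifiers relativized to the active domain. -/
noncomputable def trans (lτ : List (σ.sum σ').symbols) : FO (σ.sum σ') → (Lg σ σ').Formula ℕ
  | .rel R ts => Relations.formula (⟨R, rfl⟩ : (Lg σ σ').Relations _)
      (fun i => transTerm (ts i))
  | .eq t u => Term.equal (transTerm t) (transTerm u)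
  | .fls => ⊥
  | .imp φ ψ => (trans lτ φ).imp (trans lτ ψ)
  | .all n φ => oiAlls (γ := Unit)
      (fun m => if m = n then Sum.inr () else Sum.inl m)
      ((inAtomF lτ n).imp (trans lτ φ))

lemma update_comp (g : N → GTerm) (w : ℕ → N) (n : ℕ) (x : N) :
    Function.update (fun m => g (w m)) n (g x) = fun m => g (Function.update w n x m) := by
  funext m
  by_cases hm : m = n
  · subst hm; simp
  · simp [Function.update, hm]

lemma correspond {N : Type} [(Lg σ σ').Structure N] {g : N → GTerm}
    (hg : Function.Injective g)
    (hc : ∀ m, g (cinterp σ σ' (GTerm.const m)) = GTerm.const m)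
    (lτ : List (σ.sum σ').symbols) (hlτ : ∀ R, R ∈ lτ)
    (φ : FO (σ.sum σ')) :
    ∀ w : ℕ → N, FOSat (toInst σ σ' N g) (fun n => g (w n)) φ ↔ (trans lτ φ).Realize w := by
  induction φ with
  | rel R ts =>
    intro w
    simp only [FOSat, trans, Formula.realize_rel]
    rw [show (fun i => (ts i).eval fun n => g (w n))
        = fun i => g ((transTerm (σ := σ) (σ' := σ') (ts i)).realize w) from
      funext fun i => realize_transTerm hc (ts i) w]
    exact (mem_toInst hg R _).trans Formula.realize_rel.symm
  | eq t u =>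
    intro w
    simp only [FOSat, trans]
    rw [Formula.realize_equal, realize_transTerm hc t w, realize_transTerm hc u w]
    exact ⟨fun h => hg h, fun h => congrArg g h⟩
  | fls =>
    intro w
    simp only [FOSat, trans]
    exact iff_of_false id fun h => BoundedFormula.realize_bot.1 h
  | imp φ ψ ih1 ih2 =>
    intro w
    simp only [FOSat, trans]
    rw [Formula.realize_imp, ih1 w, ih2 w]
  | all n φ ih =>
    intro w
    simp only [FOSat, trans]
    rw [realize_oiAlls]
    have hval : ∀ (i : Unit → N),
        (fun a => Sum.elim w i (if a = n then Sum.inr () else Sum.inl a))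
          = Function.update w n (i ()) := by
      intro i
      funext a
      by_cases ha : a = n
      · subst ha; simp
      · simp [ha, Function.update]
    constructor
    · intro H i
      rw [Formula.realize_imp, hval i]
      intro hin
      rw [realize_inAtomF] at hin
      obtain ⟨R, hR, y, hrel, j, hj⟩ := hin
      simp only [Function.update_self] at hj
      have hadom : g (i ()) ∈ adom (toInst σ σ' N g) :=
        mem_adom_toInst.2 ⟨i (), ⟨_, ⟨R, rfl⟩, y, j, hrel, hj⟩, rfl⟩
      have := H (g (i ())) hadom
      rw [update_comp g w n (i ()), ih] at this
      exact this
    · intro H t ht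
      obtain ⟨x, ⟨nn, R, y, j, hrel, hjx⟩, rfl⟩ := mem_adom_toInst.1 ht
      have := H (fun _ => x)
      rw [Formula.realize_imp, hval] at this
      rw [update_comp g w n x, ih]
      apply this
      rw [realize_inAtomF]
      obtain ⟨Rv, hRv⟩ := R
      subst hRv
      exact ⟨Rv, hlτ Rv, y, hrel, j, by simpa using hjx⟩


lemma realize_constTerm {N : Type} [(Lg σ σ').Structure N] (t : GTerm) {α : Type} (v : α → N) :
    ((Constants.term (show (Lg σ σ').Constants from t)).realize v : N) = cinterp σ σ' t := by
  simp only [Constants.term, Term.realize, cinterp]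
  congr 1
  funext i
  exact i.elim0

variable (σ σ') in
/-- Diagram sentence for an atom of a `σ`-instance. -/
noncomputable def atomSent (a : Atom σ) : (Lg σ σ').Sentence :=
  Relations.formula (⟨Sum.inl a.rel, rfl⟩ : (Lg σ σ').Relations _)
    (fun i => Constants.term (show (Lg σ σ').Constants from a.args i))

variable (σ σ') in
noncomputable def neqSent (m m' : ℕ) : (Lg σ σ').Sentence :=
  (Term.equal (Constants.term (show (Lg σ σ').Constants from GTerm.const m))
    (Constants.term (show (Lg σ σ').Constants from GTerm.const m'))).not

noncomputable def psiSent (lτ : List (σ.sum σ').symbols) (Ψ : FO (σ.sum σ')) :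
    (Lg σ σ').Sentence :=
  ((trans lτ Ψ).subst
    (fun _ => Constants.term (show (Lg σ σ').Constants from GTerm.const 0))).not

noncomputable def chiSent (lσp lτ : List (σ.sum σ').symbols) : (Lg σ σ').Sentence :=
  oiAlls (γ := Unit) (fun _ : ℕ => Sum.inr ())
    ((inAtomF lσp 0).imp (inAtomF lτ 0))

/-- The theory used in the compactness argument. -/
noncomputable def theoryT (I : Inst σ) (lτ lσ lσp : List (σ.sum σ').symbols)
    (Ψ : FO (σ.sum σ')) : (Lg σ σ').Theory :=
  {s | ∃ a ∈ I, s = atomSent σ σ' a} ∪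
    {s | ∃ m m' : ℕ, m ≠ m' ∧ s = neqSent σ σ' m m'} ∪
    {psiSent lτ Ψ, chiSent lσp lσ}

lemma realize_atomSent {N : Type} [(Lg σ σ').Structure N] (a : Atom σ) :
    (N ⊨ atomSent σ σ' a) ↔
      @Structure.RelMap (Lg σ σ') N _ _ (⟨Sum.inl a.rel, rfl⟩ : (Lg σ σ').Relations _)
        (fun i => cinterp σ σ' (a.args i)) := by
  rw [Sentence.Realize, atomSent]
  erw [Formula.realize_rel]
  constructor <;> intro hx <;>
    · convert hx using 1
      funext i
      first
      | exact realize_constTerm _ _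
      | exact (realize_constTerm _ _).symm

lemma realize_neqSent {N : Type} [(Lg σ σ').Structure N] (m m' : ℕ) :
    (N ⊨ neqSent σ σ' m m') ↔
      cinterp σ σ' (GTerm.const m) ≠ (cinterp σ σ' (GTerm.const m') : N) := by
  rw [Sentence.Realize, neqSent, Formula.realize_not, Formula.realize_equal,
    realize_constTerm, realize_constTerm]

lemma realize_psiSent {N : Type} [(Lg σ σ').Structure N] (lτ : List (σ.sum σ').symbols)
    (Ψ : FO (σ.sum σ')) :
    (N ⊨ psiSent lτ Ψ) ↔
      ¬ (trans lτ Ψ).Realize (fun _ : ℕ => (cinterp σ σ' (GTerm.const 0) : N)) := by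
  rw [Sentence.Realize, psiSent, Formula.realize_not]
  unfold Formula.Realize
  rw [BoundedFormula.realize_subst]
  constructor <;> intro hx hy <;> apply hx <;>
    · convert hy using 2
      first
      | exact realize_constTerm _ _
      | exact (realize_constTerm _ _).symm

lemma realize_chiSent {N : Type} [(Lg σ σ').Structure N] (lσp lτ : List (σ.sum σ').symbols) :
    (N ⊨ chiSent lσp lτ) ↔
      ∀ x : N, (inAtomF lσp 0).Realize (fun _ : ℕ => x) →
        (inAtomF lτ 0).Realize (fun _ : ℕ => x) := by
  rw [Sentence.Realize, chiSent, realize_oiAlls]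
  constructor
  · intro H x
    have := H (fun _ => x)
    rwa [Formula.realize_imp] at this
  · intro H i
    rw [Formula.realize_imp]
    exact H (i ())


lemma sumInst_inl_mem {J : Inst σ} {K : Inst σ'} {r : σ.symbols}
    {args : Fin ((σ.sum σ').arity (Sum.inl r)) → GTerm} :
    (⟨Sum.inl r, args⟩ : Atom (σ.sum σ')) ∈ sumInst J K ↔ (⟨r, args⟩ : Atom σ) ∈ J := by
  constructor
  · rintro (⟨b, hb, heq⟩ | ⟨b, hb, heq⟩)
    · erw [Atom.mk.injEq] at heq
      obtain ⟨h1, h2⟩ := heq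
      rcases Sum.inl.inj h1 with rfl
      have : args = b.args := eq_of_heq h2
      rw [this]
      exact hb
    · erw [Atom.mk.injEq] at heq
      exact absurd heq.1 (by simp)
  · intro hb
    exact Or.inl ⟨⟨r, args⟩, hb, rfl⟩

lemma sumInst_inr_mem {J : Inst σ} {K : Inst σ'} {r : σ'.symbols}
    {args : Fin ((σ.sum σ').arity (Sum.inr r)) → GTerm} :
    (⟨Sum.inr r, args⟩ : Atom (σ.sum σ')) ∈ sumInst J K ↔ (⟨r, args⟩ : Atom σ') ∈ K := by
  constructor
  · rintro (⟨b, hb, heq⟩ | ⟨b, hb, heq⟩)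
    · erw [Atom.mk.injEq] at heq
      exact absurd heq.1 (by simp)
    · erw [Atom.mk.injEq] at heq
      obtain ⟨h1, h2⟩ := heq
      rcases Sum.inr.inj h1 with rfl
      have : args = b.args := eq_of_heq h2
      rw [this]
      exact hb
  · intro hb
    exact Or.inr ⟨⟨r, args⟩, hb, rfl⟩

lemma adom_sumInst {J : Inst σ} {K : Inst σ'} : adom (sumInst J K) = adom J ∪ adom K := by
  ext t
  constructor
  · rintro ⟨a, (⟨b, hb, rfl⟩ | ⟨b, hb, rfl⟩), i, hi⟩
    · exact Or.inl ⟨b, hb, i, hi⟩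
    · exact Or.inr ⟨b, hb, i, hi⟩
  · rintro (⟨b, hb, i, hi⟩ | ⟨b, hb, i, hi⟩)
    · exact ⟨⟨Sum.inl b.rel, b.args⟩, Or.inl ⟨b, hb, rfl⟩, i, hi⟩
    · exact ⟨⟨Sum.inr b.rel, b.args⟩, Or.inr ⟨b, hb, rfl⟩, i, hi⟩

lemma isHom_mem_adom {σ₀ : Signature} {I J : Inst σ₀} {h : GTerm → GTerm} (hh : IsHom I J h)
    {t : GTerm} (ht : t ∈ adom I) : h t ∈ adom J := by
  obtain ⟨a, ha, i, rfl⟩ := ht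
  exact ⟨⟨a.rel, fun j => h (a.args j)⟩, hh.2 a ha, i, rfl⟩

/-- The domain used for finite approximations. -/
def Dom (J : Inst σ) : Set GTerm := adom J ∪ Set.range GTerm.const

noncomputable def approxStruct (J : Inst σ) (K : Inst σ') (I₀ : Inst σ) (h : GTerm → GTerm)
    (hh : IsHom I₀ J h) : (Lg σ σ').Structure ↥(Dom J) where
  funMap {n} f x :=
    match n, f with
    | 0, t =>
      if ht : t ∈ adom I₀ then ⟨h t, Or.inl (isHom_mem_adom hh ht)⟩
      else
        match t with
        | GTerm.const m => ⟨GTerm.const m, Or.inr ⟨m, rfl⟩⟩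
        | GTerm.null _ => ⟨GTerm.const 0, Or.inr ⟨0, rfl⟩⟩
    | _+1, f => f.elim
  RelMap {n} R x := (⟨R.1, fun i => (x (Fin.cast R.2 i)).1⟩ : Atom (σ.sum σ')) ∈ sumInst J K

lemma approx_cinterp_mem {J : Inst σ} {K : Inst σ'} {I₀ : Inst σ} {h : GTerm → GTerm}
    {hh : IsHom I₀ J h} {t : GTerm} (ht : t ∈ adom I₀) :
    (@cinterp σ σ' _ (approxStruct J K I₀ h hh) t).1 = h t := by
  show ((if ht : t ∈ adom I₀ then _ else _ : ↥(Dom J))).1 = h t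
  rw [dif_pos ht]

lemma approx_cinterp_const {J : Inst σ} {K : Inst σ'} {I₀ : Inst σ} {h : GTerm → GTerm}
    {hh : IsHom I₀ J h} (m : ℕ) :
    (@cinterp σ σ' _ (approxStruct J K I₀ h hh) (GTerm.const m)).1 = GTerm.const m := by
  by_cases ht : GTerm.const m ∈ adom I₀
  · rw [approx_cinterp_mem ht, hh.1]
  · show ((if ht : GTerm.const m ∈ adom I₀ then _ else _ : ↥(Dom J))).1 = GTerm.const m
    rw [dif_neg ht]

lemma approx_toInst {J : Inst σ} {K : Inst σ'} {I₀ : Inst σ} {h : GTerm → GTerm}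
    {hh : IsHom I₀ J h} (hKJ : adom K ⊆ adom J) :
    @toInst σ σ' ↥(Dom J) (approxStruct J K I₀ h hh) Subtype.val = sumInst J K := by
  ext a
  constructor
  · rintro ⟨n, R, x, hrel, rfl⟩
    exact hrel
  · intro ha
    have hargs : ∀ i, a.args i ∈ adom J := by
      intro i
      have : a.args i ∈ adom (sumInst J K) := ⟨a, ha, i, rfl⟩
      rw [adom_sumInst] at this
      rcases this with hx | hx
      · exact hx
      · exact hKJ hx
    refine ⟨(σ.sum σ').arity a.rel, ⟨a.rel, rfl⟩, fun i => ⟨a.args i, Or.inl (hargs i)⟩,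
      ?_, ?_⟩
    · show (⟨a.rel, fun i => a.args (Fin.cast rfl i)⟩ : Atom (σ.sum σ')) ∈ sumInst J K
      convert ha
      simp
    · show a = ⟨a.rel, fun i => a.args (Fin.cast rfl i)⟩
      cases a
      rfl


lemma toInst_elim {N : Type} [(Lg σ σ').Structure N] {g : N → GTerm} {a : Atom (σ.sum σ')}
    (ha : a ∈ toInst σ σ' N g) :
    ∃ x : Fin ((σ.sum σ').arity a.rel) → N,
      @Structure.RelMap (Lg σ σ') N _ _ (⟨a.rel, rfl⟩ : (Lg σ σ').Relations _) x ∧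
        a.args = fun i => g (x i) := by
  obtain ⟨n, ⟨R', hR'⟩, y, hrel, rfl⟩ := ha
  subst hR'
  exact ⟨y, hrel, rfl⟩

lemma approx_relMap_iff {J : Inst σ} {K : Inst σ'} {I₀ : Inst σ} {h : GTerm → GTerm}
    {hh : IsHom I₀ J h} (R : (σ.sum σ').symbols)
    (x : Fin ((σ.sum σ').arity R) → ↥(Dom J)) :
    @Structure.RelMap (Lg σ σ') _ (approxStruct J K I₀ h hh) _
        (⟨R, rfl⟩ : (Lg σ σ').Relations _) x ↔
      (⟨R, fun i => (x i).1⟩ : Atom (σ.sum σ')) ∈ sumInst J K :=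
  Iff.rfl

lemma approx_model_theory
    (I₀ : Inst σ) (J : Inst σ) (K : Inst σ') (h : GTerm → GTerm)
    (hh : IsHom I₀ J h) (hKJ : adom K ⊆ adom J)
    (lτ lσ lσp : List (σ.sum σ').symbols) (hlτ : ∀ R, R ∈ lτ)
    (hlσ : ∀ R : σ.symbols, Sum.inl R ∈ lσ)
    (hlσp : ∀ s ∈ lσp, ∃ R : σ'.symbols, s = Sum.inr R)
    (Ψ : FO (σ.sum σ')) (hΨfv : Ψ.fv = ∅) (v0 : ℕ → GTerm)
    (hv0 : ¬ FOSat (sumInst J K) v0 Ψ) :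
    ∀ s ∈ theoryT I₀ lτ lσ lσp Ψ,
      @Sentence.Realize (Lg σ σ') ↥(Dom J) (approxStruct J K I₀ h hh) s := by
  letI := approxStruct J K I₀ h hh
  have hginj : Function.Injective (Subtype.val : ↥(Dom J) → GTerm) :=
    Subtype.val_injective
  intro s hs
  rcases hs with (hs | hs) | hs
  · obtain ⟨a, ha, rfl⟩ := hs
    erw [realize_atomSent, approx_relMap_iff]
    refine sumInst_inl_mem.2 ?_
    convert hh.2 a ha using 2
    first
    | exact approx_cinterp_mem ⟨a, ha, _, rfl⟩
    | exact congrArg (Atom.mk a.rel) (funext fun i => approx_cinterp_mem ⟨a, ha, i, rfl⟩)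
  · obtain ⟨m, m', hmm', rfl⟩ := hs
    rw [realize_neqSent]
    intro heq
    apply hmm'
    have := congrArg Subtype.val heq
    rw [approx_cinterp_const m, approx_cinterp_const m'] at this
    exact GTerm.const.inj this
  · rcases hs with rfl | rfl
    · rw [realize_psiSent]
      intro hreal
      apply hv0
      have hcor := (correspond hginj (fun m => approx_cinterp_const m) lτ hlτ Ψ
        (fun _ => cinterp σ σ' (GTerm.const 0))).2 hreal
      rw [approx_toInst hKJ] at hcor
      exact (fosat_closed hΨfv _ _).1 hcor
    · rw [realize_chiSent]
      intro x hx
      rw [realize_inAtomF] at hx ⊢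
      obtain ⟨R, hR, y, hrel, i, hi⟩ := hx
      obtain ⟨r, rfl⟩ := hlσp R hR
      erw [approx_relMap_iff] at hrel
      have hK : (⟨r, fun j => (y j).1⟩ : Atom σ') ∈ K := sumInst_inr_mem.1 hrel
      have hxK : (x : GTerm) ∈ adom K := ⟨_, hK, i, congrArg Subtype.val hi⟩
      obtain ⟨a, haJ, j, hj⟩ := hKJ hxK
      refine ⟨Sum.inl a.rel, hlσ a.rel,
        fun k => ⟨a.args k, Or.inl ⟨a, haJ, k, rfl⟩⟩, ?_, j, ?_⟩
      · erw [approx_relMap_iff]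
        refine sumInst_inl_mem.2 ?_
        convert haJ
        rfl
      · exact Subtype.ext hj


lemma theory_finitely_sat
    (I : Inst σ) (J : Inst σ) (K : Inst σ')
    (hfin : ∀ I' : Inst σ, I'.Finite → I' ⊆ I → HomTo I' J)
    (hKJ : adom K ⊆ adom J)
    (lτ lσ lσp : List (σ.sum σ').symbols) (hlτ : ∀ R, R ∈ lτ)
    (hlσ : ∀ R : σ.symbols, Sum.inl R ∈ lσ)
    (hlσp : ∀ s ∈ lσp, ∃ R : σ'.symbols, s = Sum.inr R)
    (Ψ : FO (σ.sum σ')) (hΨfv : Ψ.fv = ∅) (v0 : ℕ → GTerm)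
    (hv0 : ¬ FOSat (sumInst J K) v0 Ψ) :
    (theoryT I lτ lσ lσp Ψ).IsFinitelySatisfiable := by
  intro T0 hT0
  classical
  set F : (Lg σ σ').Sentence → Inst σ := fun s =>
    if hx : ∃ a ∈ I, s = atomSent σ σ' a then {hx.choose} else ∅ with hF
  have hFfin : ∀ s, (F s).Finite := fun s => by
    rw [hF]
    dsimp only
    split
    · exact Set.finite_singleton _
    · exact Set.finite_empty
  have hFsub : ∀ s, F s ⊆ I := fun s => by
    rw [hF]
    dsimp only
    split
    · next hx =>
      intro a ha
      rcases Set.mem_singleton_iff.1 ha with rfl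
      exact hx.choose_spec.1
    · exact Set.empty_subset I
  set I₀ : Inst σ := ⋃ s ∈ (T0 : Set ((Lg σ σ').Sentence)), F s with hI₀
  have hI₀fin : I₀.Finite :=
    Set.Finite.biUnion T0.finite_toSet (fun s _ => hFfin s)
  have hI₀sub : I₀ ⊆ I := by
    rw [hI₀]
    exact Set.iUnion₂_subset fun s _ => hFsub s
  obtain ⟨h, hh⟩ := hfin I₀ hI₀fin hI₀sub
  have hsub : (T0 : Set ((Lg σ σ').Sentence)) ⊆ theoryT I₀ lτ lσ lσp Ψ := by
    intro s hs
    rcases hT0 hs with (hd | hd) | hd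
    · obtain ⟨a, haI, rfl⟩ := hd
      have hx : ∃ b ∈ I, atomSent σ σ' a = atomSent σ σ' b := ⟨a, haI, rfl⟩
      refine Or.inl (Or.inl ⟨hx.choose, ?_, hx.choose_spec.2⟩)
      rw [hI₀]
      refine Set.mem_biUnion hs ?_
      rw [hF]
      dsimp only
      rw [dif_pos hx]
      rfl
    · exact Or.inl (Or.inr hd)
    · exact Or.inr hd
  letI := approxStruct J K I₀ h hh
  haveI : Nonempty ↥(Dom J) := ⟨⟨GTerm.const 0, Or.inr ⟨0, rfl⟩⟩⟩
  haveI : ↥(Dom J) ⊨ theoryT I₀ lτ lσ lσp Ψ := (Theory.model_iff _).2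
    (approx_model_theory I₀ J K h hh hKJ lτ lσ lσp hlτ hlσ hlσp Ψ hΨfv v0 hv0)
  haveI : ↥(Dom J) ⊨ (T0 : Set ((Lg σ σ').Sentence)) := Theory.Model.mono inferInstance hsub
  exact Theory.Model.isSatisfiable ↥(Dom J)


lemma key [Finite σ.symbols] [Finite σ'.symbols]
    (Ψ : FO (σ.sum σ')) (hΨfv : Ψ.fv = ∅)
    (I J : Inst σ)
    (hfin : ∀ I' : Inst σ, I'.Finite → I' ⊆ I → HomTo I' J)
    (hJ : ¬ SatASO J Ψ) :
    ∃ M : Inst σ, HomTo I M ∧ ¬ SatASO M Ψ := by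
  classical
  obtain ⟨K, hKJ, v0, hv0⟩ : ∃ K, adom K ⊆ adom J ∧ ∃ v0, ¬ FOSat (sumInst J K) v0 Ψ := by
    by_contra hcon
    push_neg at hcon
    exact hJ fun K hK v => hcon K hK v
  letI : Fintype σ.symbols := Fintype.ofFinite _
  letI : Fintype σ'.symbols := Fintype.ofFinite _
  set lσ : List (σ.sum σ').symbols := (Finset.univ : Finset σ.symbols).toList.map Sum.inl
    with hlσdef
  set lσp : List (σ.sum σ').symbols := (Finset.univ : Finset σ'.symbols).toList.map Sum.inr
    with hlσpdef
  set lτ : List (σ.sum σ').symbols := lσ ++ lσp with hlτdef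
  have hlσ : ∀ r : σ.symbols, Sum.inl r ∈ lσ := fun r =>
    List.mem_map.2 ⟨r, by simp, rfl⟩
  have hlσpel : ∀ r : σ'.symbols, Sum.inr r ∈ lσp := fun r =>
    List.mem_map.2 ⟨r, by simp, rfl⟩
  have hlτ : ∀ R, R ∈ lτ := by
    intro R
    cases R with
    | inl r => exact List.mem_append.2 (Or.inl (hlσ r))
    | inr r => exact List.mem_append.2 (Or.inr (hlσpel r))
  have hlσp : ∀ s ∈ lσp, ∃ r : σ'.symbols, s = Sum.inr r := by
    intro s hs
    obtain ⟨r, _, rfl⟩ := List.mem_map.1 hs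
    exact ⟨r, rfl⟩
  have hlσel : ∀ s ∈ lσ, ∃ r : σ.symbols, s = Sum.inl r := by
    intro s hs
    obtain ⟨r, _, rfl⟩ := List.mem_map.1 hs
    exact ⟨r, rfl⟩
  have hsat : (theoryT I lτ lσ lσp Ψ).IsSatisfiable :=
    Theory.isSatisfiable_iff_isFinitelySatisfiable.2
      (theory_finitely_sat I J K hfin hKJ lτ lσ lσp hlτ hlσ hlσp Ψ hΨfv v0 hv0)
  obtain ⟨M0⟩ := hsat
  have hM0inf : Infinite M0 := by
    refine Infinite.of_injective (fun m : ℕ => (cinterp σ σ' (GTerm.const m) : M0)) ?_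
    intro m m' hmm
    by_contra hne
    have hmem : neqSent σ σ' m m' ∈ theoryT I lτ lσ lσp Ψ :=
      Or.inl (Or.inr ⟨m, m', hne, rfl⟩)
    exact (realize_neqSent (N := (M0 : Type)) m m').1 (Theory.realize_sentence_of_mem (T := theoryT I lτ lσ lσp Ψ) hmem) hmm
  have hcard : Cardinal.lift.{0} (Lg σ σ').card
      ≤ Cardinal.lift.{0} (Cardinal.aleph0 : Cardinal.{0}) := by
    simpa using (Lg_card_le (σ := σ) (σ' := σ'))
  obtain ⟨N, hNcard⟩ := Theory.exists_model_card_eq ⟨M0, hM0inf⟩ Cardinal.aleph0 le_rfl hcard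
  haveI : Countable N := Cardinal.mk_le_aleph0_iff.1 (le_of_eq hNcard)
  obtain ⟨f, hf⟩ := exists_injective_nat N
  have hdist : ∀ m m', m ≠ m' →
      (cinterp σ σ' (GTerm.const m) : N) ≠ cinterp σ σ' (GTerm.const m') := by
    intro m m' hne
    exact (realize_neqSent (N := (N : Type)) m m').1
      (Theory.realize_sentence_of_mem (T := theoryT I lτ lσ lσp Ψ) (Or.inl (Or.inr ⟨m, m', hne, rfl⟩)))
  set g : N → GTerm := fun x =>
    if hx : ∃ m, x = cinterp σ σ' (GTerm.const m) then GTerm.const hx.choose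
    else GTerm.null (f x) with hgdef
  have hgc : ∀ m, g (cinterp σ σ' (GTerm.const m)) = GTerm.const m := by
    intro m
    have hx : ∃ m', (cinterp σ σ' (GTerm.const m) : N) = cinterp σ σ' (GTerm.const m') :=
      ⟨m, rfl⟩
    rw [hgdef]
    dsimp only
    rw [dif_pos hx]
    have hspec := hx.choose_spec
    have hem : hx.choose = m := by
      by_contra hne
      exact hdist m hx.choose (fun he => hne he.symm) hspec
    rw [hem]
  have hginj : Function.Injective g := by
    intro x y hxy
    rw [hgdef] at hxy
    dsimp only at hxy
    by_cases hx : ∃ m, x = cinterp σ σ' (GTerm.const m) <;>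
      by_cases hy : ∃ m, y = cinterp σ σ' (GTerm.const m)
    · rw [dif_pos hx, dif_pos hy] at hxy
      rw [hx.choose_spec, hy.choose_spec, GTerm.const.inj hxy]
    · rw [dif_pos hx, dif_neg hy] at hxy
      exact absurd hxy (by simp)
    · rw [dif_neg hx, dif_pos hy] at hxy
      exact absurd hxy (by simp)
    · rw [dif_neg hx, dif_neg hy] at hxy
      exact hf (GTerm.null.inj hxy)
  set W : Inst (σ.sum σ') := toInst σ σ' N g with hWdef
  set Mσ : Inst σ := {b : Atom σ | (⟨Sum.inl b.rel, b.args⟩ : Atom (σ.sum σ')) ∈ W}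
    with hMσdef
  set K' : Inst σ' := {b : Atom σ' | (⟨Sum.inr b.rel, b.args⟩ : Atom (σ.sum σ')) ∈ W}
    with hK'def
  have hW : sumInst Mσ K' = W := by
    ext a
    constructor
    · rintro (⟨b, hb, rfl⟩ | ⟨b, hb, rfl⟩) <;> exact hb
    · intro ha
      obtain ⟨ar, args⟩ := a
      cases ar with
      | inl r => exact Or.inl ⟨⟨r, args⟩, ha, rfl⟩
      | inr r => exact Or.inr ⟨⟨r, args⟩, ha, rfl⟩
  set hmap : GTerm → GTerm := fun t =>
    if t ∈ adom I then g (cinterp σ σ' t) else t with hmapdef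
  have hhom : IsHom I Mσ hmap := by
    constructor
    · intro c
      by_cases hc : GTerm.const c ∈ adom I
      · rw [hmapdef]
        dsimp only
        rw [if_pos hc, hgc]
      · rw [hmapdef]
        dsimp only
        rw [if_neg hc]
    · intro a ha
      have hreal := (realize_atomSent (N := (N : Type)) a).1
        (Theory.realize_sentence_of_mem (T := theoryT I lτ lσ lσp Ψ) (Or.inl (Or.inl ⟨a, ha, rfl⟩)))
      have hW' : (⟨Sum.inl a.rel, fun i => g (cinterp σ σ' (a.args i))⟩ :
          Atom (σ.sum σ')) ∈ W := (mem_toInst hginj _ _).2 hreal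
      show (⟨Sum.inl a.rel, fun i => hmap (a.args i)⟩ : Atom (σ.sum σ')) ∈ W
      have heq : (fun i : Fin ((σ.sum σ').arity (Sum.inl a.rel)) => hmap (a.args i))
          = fun i => g (cinterp σ σ' (a.args i)) := by
        funext i
        rw [hmapdef]
        dsimp only
        rw [if_pos ⟨a, ha, i, rfl⟩]
      rw [heq]
      exact hW'
  have hKM : adom K' ⊆ adom Mσ := by
    rintro t ⟨b, hb, i, rfl⟩
    obtain ⟨x, hrel, hargs⟩ := toInst_elim hb
    have hchi := (realize_chiSent (N := (N : Type)) lσp lσ).1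
      (Theory.realize_sentence_of_mem (T := theoryT I lτ lσ lσp Ψ) (Or.inr (Or.inr rfl)))
    have hin : (inAtomF lσp 0).Realize (fun _ : ℕ => (x i : N)) :=
      (realize_inAtomF _ _ _).2 ⟨Sum.inr b.rel, hlσpel b.rel, x, hrel, i, rfl⟩
    have hout := hchi (x i) hin
    rw [realize_inAtomF] at hout
    obtain ⟨s, hs, y, hrel', j, hj⟩ := hout
    obtain ⟨r, rfl⟩ := hlσel s hs
    have hWy : (⟨Sum.inl r, fun k => g (y k)⟩ : Atom (σ.sum σ')) ∈ W :=
      (mem_toInst hginj _ _).2 hrel'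
    refine ⟨⟨r, fun k => g (y k)⟩, hWy, j, ?_⟩
    show g (y j) = b.args i
    rw [hj, hargs]
  have hpsi := (realize_psiSent (N := (N : Type)) lτ Ψ).1
    (Theory.realize_sentence_of_mem (T := theoryT I lτ lσ lσp Ψ) (Or.inr (Or.inl rfl)))
  refine ⟨Mσ, ⟨hmap, hhom⟩, fun hSat => ?_⟩
  have hcon := hSat K' hKM (fun _ => g (cinterp σ σ' (GTerm.const 0)))
  rw [hW] at hcon
  exact hpsi ((correspond hginj hgc lτ hlτ Ψ _).1 hcon)

end Proof0

theorem non_entailment_iff_countermodel_in_universal_set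
    (σ σ' : Signature) [Finite σ.symbols] [Finite σ'.symbols]
    (har : ∀ s, 1 ≤ σ.arity s) (har' : ∀ s, 1 ≤ σ'.arity s)
    (Φ : FO σ) (hΦclosed : Φ.fv = ∅)
    (S : Set (Inst σ)) (hS : FinitelyUniversal Φ S)
    (Ψ : FO (σ.sum σ')) (hΨclosed : Ψ.fv = ∅) (hΨhom : HomClosed Ψ) :
    (∃ J : Inst σ, Sat J Φ ∧ ¬ SatASO J Ψ) ↔ ∃ I ∈ S, ¬ SatASO I Ψ := by
  constructor
  · rintro ⟨J, hJΦ, hJ⟩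
    obtain ⟨I, hIS, hfin⟩ := hS.2 J hJΦ
    refine ⟨I, hIS, fun hSat => ?_⟩
    obtain ⟨M, hhom, hM⟩ := Proof0.key Ψ hΨclosed I J hfin hJ
    exact hM (hΨhom I M hSat hhom)
  · rintro ⟨I, hIS, hI⟩
    exact ⟨I, hS.1 I hIS, hI⟩

end Stmt0
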